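/- arXiv:2109.13891 — 2 statements merged into one kernel-verified Lean document; each statement's English description precedes it below -/
import Mathlib

section
/- Let n be a natural number, let K : Matrix (Fin n) (Fin n) ℝ be symmetric positive definite, let k' : Fin n → ℝ and c : ℝ, and assume the block matrix K̂ = [[K, k'], [k'ᵀ, c]] of size (n+1)×(n+1) is positive definite. Then for every u : Fin n → ℝ and v : ℝ, writing w = (u, v), one has wᵀ K̂⁻¹ w ≥ uᵀ K⁻¹ u; consequently, for any κ ∈ ℝ the predictive variance satisfies κ − wᵀ K̂⁻¹ w ≤ κ − uᵀ K⁻¹ u. -/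
open Matrix

lemma quad_inv_lower_bound {m : Type*} [Fintype m] [DecidableEq m]
    (A : Matrix m m ℝ) (hA : A.PosDef) (w y : m → ℝ) :
    2 * (y ⬝ᵥ w) - y ⬝ᵥ (A *ᵥ y) ≤ w ⬝ᵥ (A⁻¹ *ᵥ w) := by
  have hdet : IsUnit A.det := isUnit_iff_ne_zero.2 (ne_of_gt hA.det_pos)
  have hAT : Aᵀ = A := by
    have := hA.isHermitian.eq
    rwa [Matrix.conjTranspose_eq_transpose_of_trivial] at this
  have hAAinv : ∀ x : m → ℝ, A *ᵥ (A⁻¹ *ᵥ x) = x := by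
    intro x
    rw [Matrix.mulVec_mulVec, Matrix.mul_nonsing_inv _ hdet, Matrix.one_mulVec]
  set z : m → ℝ := A⁻¹ *ᵥ w - y with hz
  have hnn : 0 ≤ z ⬝ᵥ (A *ᵥ z) := by
    have := hA.posSemidef.dotProduct_mulVec_nonneg z
    simpa using this
  have hexp : z ⬝ᵥ (A *ᵥ z) = w ⬝ᵥ (A⁻¹ *ᵥ w) - 2 * (y ⬝ᵥ w) + y ⬝ᵥ (A *ᵥ y) := by
    have h1 : A *ᵥ z = w - A *ᵥ y := by
      rw [hz, Matrix.mulVec_sub, hAAinv]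
    rw [hz, h1, sub_dotProduct, dotProduct_sub, dotProduct_sub]
    have h2 : (A⁻¹ *ᵥ w) ⬝ᵥ w = w ⬝ᵥ (A⁻¹ *ᵥ w) := dotProduct_comm _ _
    have h3 : (A⁻¹ *ᵥ w) ⬝ᵥ (A *ᵥ y) = w ⬝ᵥ y := by
      rw [Matrix.dotProduct_mulVec, ← Matrix.mulVec_transpose, hAT, hAAinv]
    have h4 : y ⬝ᵥ w = w ⬝ᵥ y := dotProduct_comm _ _
    rw [h2, h3]
    ring_nf
    rw [h4]
    ring
  linarith

/-- Non-increase of the Gaussian process predictive variance when adding an observation.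
`K` is symmetric positive definite; the block matrix `K̂ = [[K, k'], [k'ᵀ, c]]` is positive
definite.  Then for every `u, v`, writing `w = (u, v)`, one has `wᵀ K̂⁻¹ w ≥ uᵀ K⁻¹ u`, and
hence `κ − wᵀ K̂⁻¹ w ≤ κ − uᵀ K⁻¹ u` for any `κ`. -/
theorem predictive_variance_nonincreasing (n : ℕ)
    (K : Matrix (Fin n) (Fin n) ℝ) (hK : K.PosDef)
    (k' : Fin n → ℝ) (c : ℝ)
    (Khat : Matrix (Fin n ⊕ Unit) (Fin n ⊕ Unit) ℝ)
    (hKhat : Khat = Matrix.fromBlocks K (Matrix.replicateCol Unit k') (Matrix.replicateRow Unit k')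
      (Matrix.of fun _ _ => c))
    (hKhatPD : Khat.PosDef) :
    ∀ (u : Fin n → ℝ) (v : ℝ),
      u ⬝ᵥ (K⁻¹ *ᵥ u) ≤ (Sum.elim u fun _ => v) ⬝ᵥ (Khat⁻¹ *ᵥ (Sum.elim u fun _ => v)) ∧
      ∀ κ : ℝ,
        κ - (Sum.elim u fun _ => v) ⬝ᵥ (Khat⁻¹ *ᵥ (Sum.elim u fun _ => v)) ≤
          κ - u ⬝ᵥ (K⁻¹ *ᵥ u) := by
  intro u v
  have hdetK : IsUnit K.det := isUnit_iff_ne_zero.2 (ne_of_gt hK.det_pos)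
  have hKKinv : K *ᵥ (K⁻¹ *ᵥ u) = u := by
    rw [Matrix.mulVec_mulVec, Matrix.mul_nonsing_inv _ hdetK, Matrix.one_mulVec]
  set w : Fin n ⊕ Unit → ℝ := Sum.elim u fun _ => v with hw
  set y : Fin n ⊕ Unit → ℝ := Sum.elim (K⁻¹ *ᵥ u) (fun _ => 0) with hy
  have hyw : y ⬝ᵥ w = u ⬝ᵥ (K⁻¹ *ᵥ u) := by
    rw [hy, hw, sumElim_dotProduct_sumElim]
    simp [dotProduct_comm]
  have hyKy : y ⬝ᵥ (Khat *ᵥ y) = u ⬝ᵥ (K⁻¹ *ᵥ u) := by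
    rw [hy, hKhat, Matrix.fromBlocks_mulVec, sumElim_dotProduct_sumElim]
    simp [hKKinv, dotProduct_comm, show (fun _ : Unit => (0:ℝ)) = 0 from rfl,
      Matrix.mulVec_zero]
  have key := quad_inv_lower_bound Khat hKhatPD w y
  rw [hyw, hyKy] at key
  constructor
  · linarith
  · intro κ; linarith
end

section
/- Let n be a natural number, let K : Matrix (Fin n) (Fin n) ℝ be symmetric positive definite, let k' : Fin n → ℝ and c : ℝ, and assume the block matrix K̂ = [[K, k'], [k'ᵀ, c]] of size (n+1)×(n+1) is positive definite (so the Schur complement m = c − k'ᵀ K⁻¹ k' is strictly positive). Let u : Fin n → ℝ and v : ℝ satisfy uᵀ K⁻¹ k' ≠ v, and write w = (u, v). Then wᵀ K̂⁻¹ w > uᵀ K⁻¹ u; consequently, for any κ ∈ ℝ, κ − wᵀ K̂⁻¹ w < κ − uᵀ K⁻¹ u. -/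
open Matrix

/-- Strict decrease of the Gaussian process predictive variance when adding an observation
(Proposition 3).  `K` is symmetric positive definite, the block matrix
`K̂ = [[K, k'], [k'ᵀ, c]]` is positive definite (so the Schur complement
`m = c − k'ᵀ K⁻¹ k'` is strictly positive), and `u, v` satisfy `uᵀ K⁻¹ k' ≠ v`.
Then, with `w = (u, v)`, one has `wᵀ K̂⁻¹ w > uᵀ K⁻¹ u`, and hence
`κ − wᵀ K̂⁻¹ w < κ − uᵀ K⁻¹ u` for any `κ`. -/
theorem predictive_variance_strict_decrease (n : ℕ)
    (K : Matrix (Fin n) (Fin n) ℝ) (hK : K.PosDef)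
    (k' : Fin n → ℝ) (c : ℝ)
    (Khat : Matrix (Fin n ⊕ Unit) (Fin n ⊕ Unit) ℝ)
    (hKhat : Khat = Matrix.fromBlocks K (Matrix.replicateCol Unit k') (Matrix.replicateRow Unit k')
      (Matrix.of fun _ _ => c))
    (hKhatPD : Khat.PosDef)
    (u : Fin n → ℝ) (v : ℝ) (huv : u ⬝ᵥ (K⁻¹ *ᵥ k') ≠ v) :
    u ⬝ᵥ (K⁻¹ *ᵥ u) < (Sum.elim u fun _ => v) ⬝ᵥ (Khat⁻¹ *ᵥ (Sum.elim u fun _ => v)) ∧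
    ∀ κ : ℝ,
      κ - (Sum.elim u fun _ => v) ⬝ᵥ (Khat⁻¹ *ᵥ (Sum.elim u fun _ => v)) <
        κ - u ⬝ᵥ (K⁻¹ *ᵥ u) := by
  have hKK : K * K⁻¹ = 1 :=
    Matrix.mul_nonsing_inv K ((Matrix.isUnit_iff_isUnit_det K).mp hK.isUnit)
  set a : Fin n → ℝ := K⁻¹ *ᵥ k' with ha
  have hKa : K *ᵥ a = k' := by
    rw [ha, Matrix.mulVec_mulVec, hKK, Matrix.one_mulVec]
  set m : ℝ := c - k' ⬝ᵥ a with hmdef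
  -- positivity of the Schur complement
  have hm : 0 < m := by
    have hx : (Sum.elim (-a) fun _ : Unit => (1 : ℝ)) ≠ 0 := fun h => by
      simpa using congrFun h (Sum.inr ())
    have h := hKhatPD.dotProduct_mulVec_pos hx
    rw [hKhat, Matrix.fromBlocks_mulVec] at h
    have h1 : (Sum.elim (-a) fun _ : Unit => (1 : ℝ)) ∘ Sum.inl = -a := rfl
    have h2 : (Sum.elim (-a) fun _ : Unit => (1 : ℝ)) ∘ Sum.inr = fun _ => (1 : ℝ) := rfl
    rw [h1, h2] at h
    have hcol : Matrix.replicateCol Unit k' *ᵥ (fun _ => (1 : ℝ)) = k' := by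
      ext i; simp [Matrix.mulVec, Matrix.replicateCol, dotProduct]
    have hrow : Matrix.replicateRow Unit k' *ᵥ (-a) = fun _ => k' ⬝ᵥ (-a) :=
      Matrix.replicateRow_mulVec_eq_const k' (-a)
    have hofc : (Matrix.of fun _ _ : Unit => c) *ᵥ (fun _ => (1 : ℝ)) = fun _ => c := by
      ext i; simp [Matrix.mulVec, dotProduct]
    simp only [star_trivial] at h
    rw [Matrix.mulVec_neg, hKa, hcol, hrow, hofc, sumElim_dotProduct_sumElim] at h
    simp only [Pi.neg_apply, neg_add_cancel, zero_mul, Finset.sum_const_zero, zero_add,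
      dotProduct, Finset.univ_unique, Finset.sum_singleton, Pi.add_apply, one_mul,
      mul_neg, mul_zero, Finset.sum_neg_distrib] at h
    rw [hmdef]
    simp only [dotProduct] at h ⊢
    linarith
  have hmne : m ≠ 0 := ne_of_gt hm
  -- the explicit inverse of the block matrix
  set P : Matrix (Fin n) (Fin n) ℝ :=
    K⁻¹ + m⁻¹ • (Matrix.replicateCol Unit a * Matrix.replicateRow Unit a) with hP
  set Q : Matrix (Fin n) Unit ℝ := -(m⁻¹ • Matrix.replicateCol Unit a) with hQ
  set R : Matrix Unit (Fin n) ℝ := -(m⁻¹ • Matrix.replicateRow Unit a) with hR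
  set S : Matrix Unit Unit ℝ := Matrix.of fun _ _ => m⁻¹ with hS
  have haK : k' ᵥ* K⁻¹ = a := by
    have hsym : (K⁻¹)ᵀ = K⁻¹ := hK.inv.isHermitian
    rw [← hsym, Matrix.vecMul_transpose, ha]
  have hrowK : Matrix.replicateRow Unit k' * K⁻¹ = Matrix.replicateRow Unit a := by
    ext i j; simp [Matrix.mul_apply, Matrix.replicateRow, ← haK, Matrix.vecMul, dotProduct]
  have hmul : Khat * Matrix.fromBlocks P Q R S = 1 := by
    rw [hKhat, Matrix.fromBlocks_multiply, ← Matrix.fromBlocks_one]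
    have hTL : K * P + Matrix.replicateCol Unit k' * R = 1 := by
      rw [hP, hR, Matrix.mul_add, hKK, Matrix.mul_smul, ← Matrix.mul_assoc,
        ← Matrix.replicateCol_mulVec, hKa, Matrix.mul_neg, Matrix.mul_smul]
      abel
    have hTR : K * Q + Matrix.replicateCol Unit k' * S = 0 := by
      have hcolS : Matrix.replicateCol Unit k' * S = m⁻¹ • Matrix.replicateCol Unit k' := by
        ext i j; simp [hS, Matrix.mul_apply, Matrix.replicateCol]; ring
      rw [hQ, Matrix.mul_neg, Matrix.mul_smul, ← Matrix.replicateCol_mulVec, hKa, hcolS]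
      abel
    have hBL : Matrix.replicateRow Unit k' * P + (Matrix.of fun _ _ : Unit => c) * R = 0 := by
      have h1 : Matrix.replicateRow Unit k' * (Matrix.replicateCol Unit a * Matrix.replicateRow Unit a)
          = (k' ⬝ᵥ a) • Matrix.replicateRow Unit a := by
        rw [← Matrix.mul_assoc, Matrix.replicateRow_mul_replicateCol]
        ext i j; simp [Matrix.mul_apply, Matrix.replicateRow]
      have h2 : (Matrix.of fun _ _ : Unit => c) * Matrix.replicateRow Unit a
          = c • Matrix.replicateRow Unit a := by
        ext i j
        simp [Matrix.mul_apply, Matrix.replicateRow]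
      rw [hP, hR, Matrix.mul_add, hrowK, Matrix.mul_smul, h1, Matrix.mul_neg,
        Matrix.mul_smul, h2]
      rw [smul_smul, smul_smul, ← sub_eq_add_neg]
      have : (1 : ℝ) + m⁻¹ * (k' ⬝ᵥ a) - m⁻¹ * c = 0 := by
        field_simp [hmdef]
        rw [hmdef]; ring
      calc Matrix.replicateRow Unit a + (m⁻¹ * (k' ⬝ᵥ a)) • Matrix.replicateRow Unit a
            - (m⁻¹ * c) • Matrix.replicateRow Unit a
          = ((1 : ℝ) + m⁻¹ * (k' ⬝ᵥ a) - m⁻¹ * c) • Matrix.replicateRow Unit a := by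
            rw [sub_smul, add_smul, one_smul]
        _ = 0 := by rw [this, zero_smul]
    have hBR : Matrix.replicateRow Unit k' * Q + (Matrix.of fun _ _ : Unit => c) * S = 1 := by
      ext i j
      have h1 : (Matrix.replicateRow Unit k' * Matrix.replicateCol Unit a) i j = k' ⬝ᵥ a := by
        simp [Matrix.replicateRow_mul_replicateCol_apply]
      rw [hQ, hS, Matrix.mul_neg, Matrix.mul_smul]
      simp only [Matrix.add_apply, Matrix.neg_apply, Matrix.smul_apply, h1, smul_eq_mul]
      have h2 : ((Matrix.of fun _ _ : Unit => c) * Matrix.of fun _ _ : Unit => m⁻¹) i j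
          = c * m⁻¹ := by simp [Matrix.mul_apply]
      rw [h2]
      have : j = i := rfl
      rw [this, Matrix.one_apply_eq]
      field_simp [hmdef]
      ring
    rw [hTL, hTR, hBL, hBR]
  have hinv : Khat⁻¹ = Matrix.fromBlocks P Q R S := Matrix.inv_eq_right_inv hmul
  -- compute the quadratic form
  have hcomp : (Sum.elim u fun _ => v) ⬝ᵥ (Khat⁻¹ *ᵥ (Sum.elim u fun _ => v))
      = u ⬝ᵥ (K⁻¹ *ᵥ u) + m⁻¹ * (u ⬝ᵥ a - v) ^ 2 := by
    rw [hinv, Matrix.fromBlocks_mulVec]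
    have h1 : (Sum.elim u fun _ : Unit => v) ∘ Sum.inl = u := rfl
    have h2 : (Sum.elim u fun _ : Unit => v) ∘ Sum.inr = fun _ => v := rfl
    rw [h1, h2]
    have hPu : P *ᵥ u = K⁻¹ *ᵥ u + (m⁻¹ * (a ⬝ᵥ u)) • a := by
      rw [hP, Matrix.add_mulVec, Matrix.smul_mulVec, ← Matrix.mulVec_mulVec,
        Matrix.replicateRow_mulVec_eq_const]
      congr 1
      ext i
      simp [Matrix.mulVec, Matrix.replicateCol, dotProduct, Function.const]
      ring
    have hQv : Q *ᵥ (fun _ => v) = -((m⁻¹ * v) • a) := by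
      rw [hQ, Matrix.neg_mulVec, Matrix.smul_mulVec]
      congr 1
      ext i
      simp [Matrix.mulVec, Matrix.replicateCol, dotProduct, Function.const]
      ring
    have hRu : R *ᵥ u = fun _ => -(m⁻¹ * (a ⬝ᵥ u)) := by
      rw [hR, Matrix.neg_mulVec, Matrix.smul_mulVec, Matrix.replicateRow_mulVec_eq_const]
      ext i
      simp [Function.const]
    have hSv : S *ᵥ (fun _ => v) = fun _ => m⁻¹ * v := by
      ext i; simp [hS, Matrix.mulVec, dotProduct]
    have hunit : ∀ g : Unit → ℝ, (fun _ : Unit => v) ⬝ᵥ g = v * g () := by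
      intro g; simp [dotProduct]
    have hau : a ⬝ᵥ u = u ⬝ᵥ a := dotProduct_comm a u
    rw [hPu, hQv, hRu, hSv, sumElim_dotProduct_sumElim, hunit,
      dotProduct_add, dotProduct_add, dotProduct_neg, dotProduct_smul, dotProduct_smul]
    simp only [Pi.add_apply, smul_eq_mul, hau]
    ring
  have ht : u ⬝ᵥ a - v ≠ 0 := sub_ne_zero.mpr huv
  have hpos : 0 < m⁻¹ * (u ⬝ᵥ a - v) ^ 2 :=
    mul_pos (inv_pos.mpr hm) (pow_two_pos_of_ne_zero ht)
  constructor
  · rw [hcomp]; linarith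
  · intro κ; rw [hcomp]; linarith
end
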